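/- Fix integers t ≥ 2 and ℓ ≥ t with ℓ ≡ t (mod 2). Then γ_n(ℓ) → ∞ as n → ∞, where γ_n(ℓ) = (Σ_{i=0}^{n−ℓ+1} C(n−ℓ+1, i) · B̃(n − (ℓ+t)/2 + 1 − i)) / (Σ_{i=0}^{n−ℓ} C(n−ℓ, i) · B̃(n − (ℓ+t)/2 − i)). -/

import Mathlib

open Finset

abbrev SetPartition (n : ℕ) := Finpartition (Finset.univ : Finset (Fin n))

def IsTIntersecting (n t : ℕ) (A : Set (SetPartition n)) : Prop :=
  ∀ p ∈ A, ∀ q ∈ A, t ≤ (p.parts ∩ q.parts).card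

noncomputable def M (n t : ℕ) : ℕ :=
  sSup {m : ℕ | ∃ A : Set (SetPartition n), IsTIntersecting n t A ∧ A.ncard = m}

def IsNontrivTIntersecting (n t : ℕ) (A : Set (SetPartition n)) : Prop :=
  IsTIntersecting n t A ∧ {b : Finset (Fin n) | ∀ p ∈ A, b ∈ p.parts}.ncard < t

noncomputable def Mtilde (n t : ℕ) : ℕ :=
  sSup {m : ℕ | ∃ A : Set (SetPartition n), IsNontrivTIntersecting n t A ∧ A.ncard = m}

def fixedSet {n : ℕ} (p : SetPartition n) : Finset (Fin n) :=
  Finset.univ.filter (fun i => ({i} : Finset (Fin n)) ∈ p.parts)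

noncomputable def Btilde (m : ℕ) : ℕ :=
  Nat.card {p : SetPartition m // ∀ b ∈ p.parts, b.card ≠ 1}

noncomputable def Bell (m : ℕ) : ℕ := Nat.card (SetPartition m)

noncomputable def gammaQ (n t l : ℕ) : ℚ :=
  ((∑ i ∈ Finset.range (n - l + 2), (n - l + 1).choose i * Btilde (n - (l + t) / 2 + 1 - i) : ℕ) : ℚ) /
  ((∑ i ∈ Finset.range (n - l + 1), (n - l).choose i * Btilde (n - (l + t) / 2 - i) : ℕ) : ℚ)

noncomputable def maxCond (n t l : ℕ) : Prop :=
  ((l - t : ℕ) : ℚ) / (2 * ((l - 1 : ℕ) : ℚ)) * gammaQ n t l ≤ 1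

def blockOf {n : ℕ} (p : SetPartition n) (i : Fin n) : Finset (Fin n) :=
  (p.parts.filter (fun b => i ∈ b)).sup id

def fixParts {n : ℕ} (i j : Fin n) (p : SetPartition n) : Finset (Finset (Fin n)) :=
  if i ≠ j ∧ j ∈ blockOf p i then
    (p.parts \ {blockOf p i}) ∪ {({i} : Finset (Fin n)), blockOf p i \ {i}}
  else p.parts

def shiftParts {n : ℕ} (v w : Fin n) (p : SetPartition n) : Finset (Finset (Fin n)) :=
  if ({w} : Finset (Fin n)) ∈ p.parts ∧ ({v} : Finset (Fin n)) ∉ p.parts then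
    (p.parts \ {blockOf p v, ({w} : Finset (Fin n))}) ∪
      {insert w (blockOf p v \ {v}), ({v} : Finset (Fin n))}
  else p.parts

def FixClosed {n : ℕ} (A : Set (SetPartition n)) : Prop :=
  ∀ p ∈ A, ∀ i j : Fin n, i ≠ j → ∀ q : SetPartition n, q.parts = fixParts i j p → q ∈ A

def ShiftClosed {n : ℕ} (A : Set (SetPartition n)) : Prop :=
  ∀ p ∈ A, ∀ v w : Fin n, v < w → ∀ q : SetPartition n, q.parts = shiftParts v w p → q ∈ A

def DClosedOn {n : ℕ} (A : Set (SetPartition n)) (S : Set (Fin n)) : Prop :=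
  ∀ p ∈ A, ∀ v ∈ S, ∀ w ∈ S, v ≠ w → ∀ q : SetPartition n, q.parts = shiftParts v w p → q ∈ A

def Hfam (n t i : ℕ) : Finset (Finset (Fin n)) :=
  Finset.univ.filter (fun H : Finset (Fin n) =>
    (H ⊆ Finset.univ.filter (fun x : Fin n => x.val < t + i) ∧ H.card = t + 1 ∧
      Finset.univ.filter (fun x : Fin n => x.val < t) ⊆ H) ∨
    (H ⊆ Finset.univ.filter (fun x : Fin n => x.val < t + i) ∧ H.card = t + i - 1 ∧
      Finset.univ.filter (fun x : Fin n => t ≤ x.val ∧ x.val < t + i) ⊆ H))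

def upset (n : ℕ) (C : Finset (Finset (Fin n))) : Finset (Finset (Fin n)) :=
  Finset.univ.filter (fun S => ∃ c ∈ C, c ⊆ S)

noncomputable def nu (n t i : ℕ) : ℕ :=
  ∑ S ∈ upset n (Hfam n t i), Btilde (n - S.card)

def minFixedSets {n : ℕ} (A : Set (SetPartition n)) : Set (Finset (Fin n)) :=
  {E | (∃ p ∈ A, fixedSet p = E) ∧ ∀ p ∈ A, fixedSet p ⊆ E → fixedSet p = E}

noncomputable def splus {n : ℕ} (A : Set (SetPartition n)) : ℕ :=
  sSup {m : ℕ | ∃ E ∈ minFixedSets A, m = E.sup (fun x => x.val + 1)}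

namespace GammaAux

abbrev NSP (k : ℕ) := {p : SetPartition k // ∀ b ∈ p.parts, b.card ≠ 1}

noncomputable instance (k : ℕ) : Fintype (NSP k) := Fintype.ofFinite _

lemma last_not_mem_map {k : ℕ} (c : Finset (Fin k)) :
    Fin.last k ∉ c.map Fin.castSuccEmb := by
  simp only [mem_map, Fin.coe_castSuccEmb]
  rintro ⟨x, -, hx⟩
  exact absurd hx (Fin.castSucc_lt_last x).ne

lemma disjoint_map_of_disjoint {k : ℕ} {c d : Finset (Fin k)} (h : Disjoint c d) :
    Disjoint (c.map Fin.castSuccEmb) (d.map Fin.castSuccEmb) :=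
  (Finset.disjoint_map _).2 h

def mapEmb (k : ℕ) : Finset (Fin k) ↪ Finset (Fin (k+1)) :=
  ⟨Finset.map Fin.castSuccEmb, Finset.map_injective _⟩

lemma mem_mapEmb {k : ℕ} {S : Finset (Finset (Fin k))} {A : Finset (Fin (k+1))} :
    A ∈ S.map (mapEmb k) ↔ ∃ c ∈ S, c.map Fin.castSuccEmb = A := by
  simp [mapEmb]

noncomputable def insertLast {k : ℕ} (P : SetPartition k) (b : Finset (Fin k))
    (hb : b ∈ P.parts) : SetPartition (k+1) where
  parts := insert (insert (Fin.last k) (b.map Fin.castSuccEmb))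
    ((P.parts.erase b).map (mapEmb k))
  supIndep := by
    have key : ∀ c ∈ P.parts.erase b,
        Disjoint (insert (Fin.last k) (b.map Fin.castSuccEmb)) (c.map Fin.castSuccEmb) := by
      intro c hc
      rw [Finset.disjoint_left]
      intro x hx hx'
      rw [mem_insert] at hx
      obtain rfl | hx := hx
      · exact last_not_mem_map c hx'
      · have hd : Disjoint b c :=
          P.disjoint hb (Finset.mem_erase.1 hc).2 (fun h => (Finset.mem_erase.1 hc).1 h.symm)
        exact Finset.disjoint_left.1 (disjoint_map_of_disjoint hd) hx hx'
    rw [Finset.supIndep_iff_pairwiseDisjoint]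
    intro A hA B hB hAB
    simp only [coe_insert, Set.mem_insert_iff, mem_coe, mem_mapEmb] at hA hB
    simp only [Function.onFun, id_eq]
    obtain rfl | ⟨c, hc, rfl⟩ := hA <;> obtain rfl | ⟨d, hd, rfl⟩ := hB
    · exact absurd rfl hAB
    · exact key d hd
    · exact (key c hc).symm
    · refine disjoint_map_of_disjoint (P.disjoint (Finset.mem_erase.1 hc).2
        (Finset.mem_erase.1 hd).2 ?_)
      intro h; exact hAB (by rw [h])
  sup_parts := by
    apply Finset.Subset.antisymm
    · exact fun x _ => mem_univ x
    · intro x _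
      rw [Finset.mem_sup]
      rcases eq_or_ne x (Fin.last k) with rfl | hx
      · exact ⟨_, mem_insert_self _ _, mem_insert_self _ _⟩
      · obtain ⟨y, rfl⟩ := Fin.exists_castSucc_eq.2 hx
        obtain ⟨c, hc, hyc⟩ := P.exists_mem (mem_univ y)
        rcases eq_or_ne c b with rfl | hcb
        · refine ⟨_, mem_insert_self _ _, mem_insert_of_mem ?_⟩
          exact mem_map_of_mem _ hyc
        · refine ⟨c.map Fin.castSuccEmb, mem_insert_of_mem
            (mem_mapEmb.2 ⟨c, Finset.mem_erase.2 ⟨hcb, hc⟩, rfl⟩), mem_map_of_mem _ hyc⟩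
  bot_notMem := by
    rw [bot_eq_empty, mem_insert]
    push_neg
    refine ⟨?_, ?_⟩
    · intro h
      have := mem_insert_self (Fin.last k) (b.map Fin.castSuccEmb)
      rw [← h] at this
      exact absurd this (notMem_empty _)
    · intro h
      obtain ⟨c, hc, hcm⟩ := mem_mapEmb.1 h
      obtain ⟨x, hx⟩ := P.nonempty_of_mem_parts (Finset.mem_erase.1 hc).2
      have : Fin.castSucc x ∈ (∅ : Finset (Fin (k+1))) := hcm ▸ mem_map_of_mem _ hx
      exact absurd this (notMem_empty _)

lemma insertLast_parts {k : ℕ} (P : SetPartition k) (b : Finset (Fin k)) (hb : b ∈ P.parts) :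
    (insertLast P b hb).parts = insert (insert (Fin.last k) (b.map Fin.castSuccEmb))
      ((P.parts.erase b).map (mapEmb k)) := rfl

end GammaAux

namespace GammaAux

lemma insertLast_nsp {k : ℕ} (P : SetPartition k) (hP : ∀ b ∈ P.parts, b.card ≠ 1)
    (b : Finset (Fin k)) (hb : b ∈ P.parts) :
    ∀ A ∈ (insertLast P b hb).parts, A.card ≠ 1 := by
  intro A hA
  rw [insertLast_parts, mem_insert] at hA
  obtain rfl | hA := hA
  · rw [Finset.card_insert_of_notMem (last_not_mem_map b), Finset.card_map]
    have := (P.nonempty_of_mem_parts hb).card_pos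
    omega
  · obtain ⟨c, hc, rfl⟩ := mem_mapEmb.1 hA
    rw [Finset.card_map]
    exact hP c (Finset.mem_erase.1 hc).2

lemma insertLast_inj {k : ℕ} {P P' : SetPartition k} {b b' : Finset (Fin k)}
    {hb : b ∈ P.parts} {hb' : b' ∈ P'.parts}
    (h : insertLast P b hb = insertLast P' b' hb') : P = P' ∧ b = b' := by
  have hparts := congrArg Finpartition.parts h
  rw [insertLast_parts, insertLast_parts] at hparts
  set X := insert (Fin.last k) (b.map Fin.castSuccEmb) with hX
  set X' := insert (Fin.last k) (b'.map Fin.castSuccEmb) with hX'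
  have hXX' : X = X' := by
    have hmem : X ∈ insert X' ((P'.parts.erase b').map (mapEmb k)) := by
      rw [← hparts]; exact mem_insert_self _ _
    rw [mem_insert] at hmem
    obtain h1 | h1 := hmem
    · exact h1
    · obtain ⟨c, -, hc⟩ := mem_mapEmb.1 h1
      exact absurd (hc ▸ mem_insert_self _ _ : Fin.last k ∈ c.map Fin.castSuccEmb)
        (last_not_mem_map c)
  have hbb' : b = b' := by
    have h1 : b.map Fin.castSuccEmb = b'.map Fin.castSuccEmb := by
      have e1 : X.erase (Fin.last k) = b.map Fin.castSuccEmb :=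
        Finset.erase_insert (last_not_mem_map b)
      have e2 : X'.erase (Fin.last k) = b'.map Fin.castSuccEmb :=
        Finset.erase_insert (last_not_mem_map b')
      rw [← e1, ← e2, hXX']
    exact Finset.map_injective _ h1
  subst hbb'
  refine ⟨?_, rfl⟩
  have hXnot : X ∉ (P.parts.erase b).map (mapEmb k) := by
    intro hmem
    obtain ⟨c, -, hc⟩ := mem_mapEmb.1 hmem
    exact absurd (hc ▸ mem_insert_self _ _ : Fin.last k ∈ c.map Fin.castSuccEmb)
      (last_not_mem_map c)
  have hXnot' : X' ∉ (P'.parts.erase b).map (mapEmb k) := by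
    intro hmem
    obtain ⟨c, -, hc⟩ := mem_mapEmb.1 hmem
    exact absurd (hc ▸ mem_insert_self _ _ : Fin.last k ∈ c.map Fin.castSuccEmb)
      (last_not_mem_map c)
  rw [hXX'] at hparts hXnot
  have herase : (P.parts.erase b).map (mapEmb k) = (P'.parts.erase b).map (mapEmb k) := by
    have h2 := congrArg (fun S => Finset.erase S X') hparts
    rwa [Finset.erase_insert hXnot, Finset.erase_insert hXnot'] at h2
  have herase2 : P.parts.erase b = P'.parts.erase b := Finset.map_injective _ herase
  ext1
  rw [← Finset.insert_erase hb, ← Finset.insert_erase hb', herase2]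

end GammaAux

namespace GammaAux

lemma part_eq_filter {k : ℕ} (P : SetPartition k) (i : Fin k) :
    P.part i = univ.filter (fun j => P.part j = P.part i) := by
  ext j
  simp only [mem_filter, mem_univ, true_and]
  constructor
  · intro hj
    exact P.part_eq_of_mem (P.part_mem.2 (mem_univ i)) hj
  · intro hj
    rw [← hj]
    exact P.mem_part (mem_univ j)

lemma parts_eq_image_part {k : ℕ} (P : SetPartition k) :
    P.parts = univ.image P.part := by
  apply Finset.Subset.antisymm
  · intro c hc
    obtain ⟨x, hx⟩ := P.nonempty_of_mem_parts hc
    exact mem_image.2 ⟨x, mem_univ x, P.part_eq_of_mem hc hx⟩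
  · intro c hc
    obtain ⟨i, -, rfl⟩ := mem_image.1 hc
    exact P.part_mem.2 (mem_univ i)

noncomputable def idx {k K : ℕ} (P : SetPartition k) (hP : P.parts.card ≤ K) (i : Fin k) :
    Fin K :=
  Fin.castLE (le_of_le_of_eq (le_of_eq (Fintype.card_coe P.parts)) rfl |>.trans hP |>.trans (le_refl K) |> fun h => h)
    ((Fintype.equivFin ↥P.parts) ⟨P.part i, P.part_mem.2 (mem_univ i)⟩)

lemma idx_eq_iff {k K : ℕ} (P : SetPartition k) (hP : P.parts.card ≤ K) (i j : Fin k) :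
    idx P hP i = idx P hP j ↔ P.part i = P.part j := by
  unfold idx
  rw [Fin.castLE_injective _ |>.eq_iff, (Fintype.equivFin ↥P.parts).injective.eq_iff,
    Subtype.mk.injEq]

lemma idx_inj {k K : ℕ} {P Q : SetPartition k} {hP : P.parts.card ≤ K}
    {hQ : Q.parts.card ≤ K} (h : ∀ i, idx P hP i = idx Q hQ i) : P = Q := by
  have key : ∀ i, P.part i = Q.part i := by
    intro i
    have hrel : ∀ j, (P.part j = P.part i) ↔ (Q.part j = Q.part i) := by
      intro j
      rw [← idx_eq_iff P hP, ← idx_eq_iff Q hQ, h i, h j]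
    rw [part_eq_filter P i, part_eq_filter Q i]
    exact Finset.filter_congr (fun j _ => by simp [hrel j])
  ext1
  rw [parts_eq_image_part, parts_eq_image_part]
  exact Finset.image_congr (fun i _ => key i)

lemma small_count (k K : ℕ) :
    Fintype.card {P : NSP k // P.1.parts.card < K} ≤ K ^ k := by
  have hcard : Fintype.card (Fin k → Fin K) = K ^ k := by simp
  rw [← hcard]
  apply Fintype.card_le_of_injective (fun P => idx P.1.1 (le_of_lt P.2))
  intro P Q h
  exact Subtype.ext (Subtype.ext (idx_inj (fun i => congrFun h i)))

end GammaAux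

namespace GammaAux

noncomputable def Btilde' (m : ℕ) : ℕ :=
  Nat.card {p : SetPartition m // ∀ b ∈ p.parts, b.card ≠ 1}

lemma Btilde'_eq_card (m : ℕ) : Btilde' m = Fintype.card (NSP m) :=
  Nat.card_eq_fintype_card

noncomputable def bigMap {k K : ℕ} (x : Fin K × {P : NSP k // K ≤ P.1.parts.card}) :
    NSP (k+1) :=
  let h : K ≤ Fintype.card ↥x.2.1.1.parts := le_of_le_of_eq x.2.2 (Fintype.card_coe _).symm
  let b := (Fintype.equivFin ↥x.2.1.1.parts).symm (Fin.castLE h x.1)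
  ⟨insertLast x.2.1.1 b.1 b.2, insertLast_nsp x.2.1.1 x.2.1.2 b.1 b.2⟩

lemma bigMap_inj {k K : ℕ} : Function.Injective (bigMap (k := k) (K := K)) := by
  rintro ⟨a, P, hP⟩ ⟨a', P', hP'⟩ h
  have h1 := Subtype.ext_iff.1 h
  simp only [bigMap] at h1
  obtain ⟨hPP, hbb⟩ := insertLast_inj h1
  have hP2 : P = P' := Subtype.ext hPP
  subst hP2
  have hb : ((Fintype.equivFin ↥P.1.parts).symm (Fin.castLE (le_of_le_of_eq hP (Fintype.card_coe _).symm) a))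
      = ((Fintype.equivFin ↥P.1.parts).symm (Fin.castLE (le_of_le_of_eq hP' (Fintype.card_coe _).symm) a')) :=
    Subtype.ext hbb
  have := (Fintype.equivFin ↥P.1.parts).symm.injective hb
  have := Fin.castLE_injective _ this
  simp only [Prod.mk.injEq]
  exact ⟨this, trivial⟩

lemma ratio_ineq (K r : ℕ) (hK : 1 ≤ K) :
    K * Btilde' r ≤ Btilde' (r + 1) + K ^ (r + 1) := by
  classical
  have hbig : K * Fintype.card {P : NSP r // K ≤ P.1.parts.card} ≤ Fintype.card (NSP (r+1)) := by
    have := Fintype.card_le_of_injective _ (bigMap_inj (k := r) (K := K))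
    rwa [Fintype.card_prod, Fintype.card_fin] at this
  have hsmall : Fintype.card {P : NSP r // ¬ K ≤ P.1.parts.card} ≤ K ^ r := by
    have : Fintype.card {P : NSP r // ¬ K ≤ P.1.parts.card}
        = Fintype.card {P : NSP r // P.1.parts.card < K} := by
      apply Fintype.card_congr
      exact Equiv.subtypeEquivRight (fun P => by omega)
    rw [this]
    exact small_count r K
  have hsplit : Fintype.card {P : NSP r // ¬ K ≤ P.1.parts.card}
      = Fintype.card (NSP r) - Fintype.card {P : NSP r // K ≤ P.1.parts.card} :=
    Fintype.card_subtype_compl _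
  have hle : Fintype.card {P : NSP r // K ≤ P.1.parts.card} ≤ Fintype.card (NSP r) :=
    Fintype.card_subtype_le _
  rw [Btilde'_eq_card, Btilde'_eq_card]
  have e1 : Fintype.card (NSP r) = Fintype.card {P : NSP r // K ≤ P.1.parts.card}
      + Fintype.card {P : NSP r // ¬ K ≤ P.1.parts.card} := by omega
  calc K * Fintype.card (NSP r)
      = K * Fintype.card {P : NSP r // K ≤ P.1.parts.card}
        + K * Fintype.card {P : NSP r // ¬ K ≤ P.1.parts.card} := by rw [e1]; ring
    _ ≤ Fintype.card (NSP (r+1)) + K * K ^ r := by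
        have := Nat.mul_le_mul_left K hsmall
        omega
    _ = Fintype.card (NSP (r+1)) + K ^ (r + 1) := by ring

end GammaAux

namespace GammaAux

def pairEmb {k : ℕ} (j : Fin (k+1)) : Fin k ↪ Fin (k+2) :=
  (j.succAboveEmb).trans Fin.castSuccEmb

lemma pairEmb_apply {k : ℕ} (j : Fin (k+1)) (x : Fin k) :
    pairEmb j x = Fin.castSucc (j.succAbove x) := rfl

lemma castSucc_j_not_mem_pairEmb {k : ℕ} (j : Fin (k+1)) (c : Finset (Fin k)) :
    Fin.castSucc j ∉ c.map (pairEmb j) := by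
  simp only [mem_map]
  rintro ⟨x, -, hx⟩
  rw [pairEmb_apply] at hx
  exact Fin.succAbove_ne j x (Fin.castSucc_injective _ hx)

lemma last_not_mem_pairEmb {k : ℕ} (j : Fin (k+1)) (c : Finset (Fin k)) :
    Fin.last (k+1) ∉ c.map (pairEmb j) := by
  simp only [mem_map]
  rintro ⟨x, -, hx⟩
  rw [pairEmb_apply] at hx
  exact (Fin.castSucc_lt_last _).ne hx

def pairBlock {k : ℕ} (j : Fin (k+1)) : Finset (Fin (k+2)) :=
  {Fin.castSucc j, Fin.last (k+1)}

lemma mem_mapP {k : ℕ} {j : Fin (k+1)} {S : Finset (Finset (Fin k))} {A : Finset (Fin (k+2))} :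
    A ∈ S.map ⟨Finset.map (pairEmb j), Finset.map_injective _⟩ ↔
      ∃ c ∈ S, c.map (pairEmb j) = A := by
  simp

noncomputable def addPair {k : ℕ} (j : Fin (k+1)) (P : SetPartition k) : SetPartition (k+2) where
  parts := insert (pairBlock j) (P.parts.map ⟨Finset.map (pairEmb j), Finset.map_injective _⟩)
  supIndep := by
    have key : ∀ c ∈ P.parts, Disjoint (pairBlock j) (c.map (pairEmb j)) := by
      intro c _
      rw [Finset.disjoint_left]
      intro x hx hx'
      rw [pairBlock, mem_insert, mem_singleton] at hx
      obtain rfl | rfl := hx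
      · exact castSucc_j_not_mem_pairEmb j c hx'
      · exact last_not_mem_pairEmb j c hx'
    rw [Finset.supIndep_iff_pairwiseDisjoint]
    intro A hA B hB hAB
    simp only [coe_insert, Set.mem_insert_iff, mem_coe, mem_mapP] at hA hB
    simp only [Function.onFun, id_eq]
    obtain rfl | ⟨c, hc, rfl⟩ := hA <;> obtain rfl | ⟨d, hd, rfl⟩ := hB
    · exact absurd rfl hAB
    · exact key d hd
    · exact (key c hc).symm
    · refine (Finset.disjoint_map _).2 (P.disjoint hc hd ?_)
      intro h; exact hAB (by rw [h])
  sup_parts := by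
    apply Finset.Subset.antisymm
    · exact fun x _ => mem_univ x
    · intro x _
      rw [Finset.mem_sup]
      rcases eq_or_ne x (Fin.last (k+1)) with rfl | hx
      · exact ⟨_, mem_insert_self _ _, by simp [pairBlock]⟩
      · obtain ⟨y, rfl⟩ := Fin.exists_castSucc_eq.2 hx
        rcases eq_or_ne y j with rfl | hyj
        · exact ⟨_, mem_insert_self _ _, by simp [pairBlock]⟩
        · obtain ⟨z, rfl⟩ := Fin.exists_succAbove_eq hyj
          obtain ⟨c, hc, hzc⟩ := P.exists_mem (mem_univ z)
          refine ⟨c.map (pairEmb j), mem_insert_of_mem (mem_mapP.2 ⟨c, hc, rfl⟩), ?_⟩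
          rw [← pairEmb_apply]
          exact mem_map_of_mem _ hzc
  bot_notMem := by
    rw [bot_eq_empty, mem_insert]
    push_neg
    refine ⟨?_, ?_⟩
    · intro h
      have : Fin.last (k+1) ∈ pairBlock j := by simp [pairBlock]
      rw [← h] at this
      exact absurd this (notMem_empty _)
    · intro h
      obtain ⟨c, hc, hcm⟩ := mem_mapP.1 h
      obtain ⟨x, hx⟩ := P.nonempty_of_mem_parts hc
      have : pairEmb j x ∈ (∅ : Finset (Fin (k+2))) := hcm ▸ mem_map_of_mem _ hx
      exact absurd this (notMem_empty _)

lemma addPair_parts {k : ℕ} (j : Fin (k+1)) (P : SetPartition k) :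
    (addPair j P).parts = insert (pairBlock j)
      (P.parts.map ⟨Finset.map (pairEmb j), Finset.map_injective _⟩) := rfl

lemma castSucc_ne_last {k : ℕ} (j : Fin (k+1)) : Fin.castSucc j ≠ Fin.last (k+1) :=
  (Fin.castSucc_lt_last j).ne

lemma addPair_nsp {k : ℕ} (j : Fin (k+1)) (P : SetPartition k)
    (hP : ∀ b ∈ P.parts, b.card ≠ 1) :
    ∀ A ∈ (addPair j P).parts, A.card ≠ 1 := by
  intro A hA
  rw [addPair_parts, mem_insert] at hA
  obtain rfl | hA := hA
  · rw [pairBlock, Finset.card_insert_of_notMem (by simp [castSucc_ne_last j]),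
      Finset.card_singleton]
    omega
  · obtain ⟨c, hc, rfl⟩ := mem_mapP.1 hA
    rw [Finset.card_map]
    exact hP c hc

lemma last_not_mem_pairEmb_set {k : ℕ} (j : Fin (k+1)) {A : Finset (Fin (k+2))}
    (hA : A ∈ (Finset.map ⟨Finset.map (pairEmb j), Finset.map_injective _⟩ ·) ∅) : True := trivial

lemma addPair_inj {k : ℕ} {j j' : Fin (k+1)} {P P' : SetPartition k}
    (h : addPair j P = addPair j' P') : j = j' ∧ P = P' := by
  have hparts := congrArg Finpartition.parts h
  rw [addPair_parts, addPair_parts] at hparts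
  have hjj' : j = j' := by
    have hmem : pairBlock j ∈ insert (pairBlock j')
        (P'.parts.map ⟨Finset.map (pairEmb j'), Finset.map_injective _⟩) := by
      rw [← hparts]; exact mem_insert_self _ _
    rw [mem_insert] at hmem
    obtain h1 | h1 := hmem
    · have : Fin.castSucc j ∈ pairBlock j' := by
        rw [← h1]; simp [pairBlock]
      rw [pairBlock, mem_insert, mem_singleton] at this
      obtain h2 | h2 := this
      · exact Fin.castSucc_injective _ h2
      · exact absurd h2 (castSucc_ne_last j)
    · obtain ⟨c, -, hc⟩ := mem_mapP.1 h1
      have : Fin.last (k+1) ∈ c.map (pairEmb j') := by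
        rw [hc]; simp [pairBlock]
      exact absurd this (last_not_mem_pairEmb j' c)
  subst hjj'
  refine ⟨rfl, ?_⟩
  have hnot : ∀ (Q : SetPartition k), pairBlock j ∉
      Q.parts.map ⟨Finset.map (pairEmb j), Finset.map_injective _⟩ := by
    intro Q hmem
    obtain ⟨c, -, hc⟩ := mem_mapP.1 hmem
    have : Fin.last (k+1) ∈ c.map (pairEmb j) := by
      rw [hc]; simp [pairBlock]
    exact absurd this (last_not_mem_pairEmb j c)
  have h2 := congrArg (fun S => Finset.erase S (pairBlock j)) hparts
  rw [Finset.erase_insert (hnot P), Finset.erase_insert (hnot P')] at h2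
  have := Finset.map_injective _ h2
  exact Finpartition.ext this

lemma addPair_card (k : ℕ) : (k + 1) * Btilde' k ≤ Btilde' (k + 2) := by
  rw [Btilde'_eq_card, Btilde'_eq_card]
  have hinj : Function.Injective
      (fun x : Fin (k+1) × NSP k => (⟨addPair x.1 x.2.1, addPair_nsp x.1 x.2.1 x.2.2⟩ : NSP (k+2))) := by
    rintro ⟨j, P⟩ ⟨j', P'⟩ h
    have h1 := Subtype.ext_iff.1 h
    simp only at h1
    obtain ⟨hj, hP⟩ := addPair_inj h1
    simp only [Prod.mk.injEq]
    exact ⟨hj, Subtype.ext hP⟩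
  have := Fintype.card_le_of_injective _ hinj
  rwa [Fintype.card_prod, Fintype.card_fin] at this

end GammaAux

namespace GammaAux

lemma one_le_Btilde' (m : ℕ) (hm : m ≠ 1) : 1 ≤ Btilde' m := by
  have : Nonempty (NSP m) := by
    rcases Nat.eq_zero_or_pos m with rfl | hpos
    · refine ⟨⟨⊥, ?_⟩⟩
      intro b hb
      rw [Finpartition.parts_bot] at hb
      simp only [Finset.univ_eq_empty, Finset.map_empty] at hb
      exact absurd hb (notMem_empty _)
    · have h2 : 2 ≤ m := by omega
      have hne : (univ : Finset (Fin m)) ≠ ⊥ := by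
        have : Nonempty (Fin m) := ⟨⟨0, hpos⟩⟩
        simpa [bot_eq_empty] using Finset.univ_nonempty.ne_empty
      refine ⟨⟨Finpartition.indiscrete hne, ?_⟩⟩
      intro b hb
      rw [Finpartition.indiscrete_parts, mem_singleton] at hb
      subst hb
      rw [Finset.card_univ, Fintype.card_fin]
      omega
  rw [Btilde'_eq_card]
  exact Fintype.card_pos

lemma fact_le_Btilde' : ∀ r : ℕ, (r / 2).factorial ≤ Btilde' (r + 2)
  | 0 => by simpa using one_le_Btilde' 2 (by norm_num)
  | 1 => by simpa using one_le_Btilde' 3 (by norm_num)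
  | (r+2) => by
    have ih := fact_le_Btilde' r
    have h1 : (r + 2) / 2 = r / 2 + 1 := by omega
    rw [h1, Nat.factorial_succ]
    calc (r / 2 + 1) * (r / 2).factorial ≤ (r + 3) * Btilde' (r + 2) := by
          apply Nat.mul_le_mul _ ih
          omega
      _ ≤ Btilde' (r + 4) := by
          have := addPair_card (r + 2)
          convert this using 2 <;> omega
      _ = Btilde' (r + 2 + 2) := by norm_num

noncomputable def Ssum (m c : ℕ) : ℕ :=
  ∑ i ∈ range (m+1), (m.choose i) * Btilde' (m + c - i)

noncomputable def Tsum (m c : ℕ) : ℕ :=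
  ∑ i ∈ range (m+1), (m.choose i) * Btilde' (m + c + 1 - i)

lemma pascal_sum (m c : ℕ) : Ssum (m+1) c = Tsum m c + Ssum m c := by
  unfold Ssum Tsum
  rw [Finset.sum_range_succ' (fun i => ((m+1).choose i) * Btilde' (m + 1 + c - i)) (m+1)]
  have e1 : ∀ i ∈ range (m+1), (m+1).choose (i+1) * Btilde' (m + 1 + c - (i+1))
      = m.choose i * Btilde' (m + c - i) + m.choose (i+1) * Btilde' (m + c - i) := by
    intro i hi
    rw [Nat.choose_succ_succ]
    have : m + 1 + c - (i + 1) = m + c - i := by omega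
    rw [this, add_mul]
  rw [Finset.sum_congr rfl e1, Finset.sum_add_distrib]
  have e2 : ∑ i ∈ range (m+1), m.choose (i+1) * Btilde' (m + c - i)
      = ∑ i ∈ range m, m.choose (i+1) * Btilde' (m + c - i) := by
    rw [Finset.sum_range_succ, Nat.choose_succ_self, zero_mul, add_zero]
  have e3 : ∑ i ∈ range (m+1), m.choose i * Btilde' (m + c + 1 - i)
      = ∑ i ∈ range m, m.choose (i+1) * Btilde' (m + c - i) + Btilde' (m + 1 + c) := by
    rw [Finset.sum_range_succ' (fun i => m.choose i * Btilde' (m + c + 1 - i)) m]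
    congr 1
    · apply Finset.sum_congr rfl
      intro i hi
      have : m + c + 1 - (i+1) = m + c - i := by omega
      rw [this]
    · simp only [Nat.choose_zero_right, one_mul]
      congr 1
      omega
  rw [e2, e3]
  simp only [Nat.choose_zero_right, one_mul, Nat.sub_zero]
  ring

lemma key_step (m c K : ℕ) (hK : 1 ≤ K) :
    K * Ssum m c ≤ Tsum m c + K ^ (m + c + 1) * 2 ^ m := by
  unfold Ssum Tsum
  rw [Finset.mul_sum]
  calc ∑ i ∈ range (m+1), K * (m.choose i * Btilde' (m + c - i))
      ≤ ∑ i ∈ range (m+1), (m.choose i * Btilde' (m + c + 1 - i)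
          + m.choose i * K ^ (m + c + 1)) := by
        apply Finset.sum_le_sum
        intro i hi
        rw [mem_range] at hi
        have hr := ratio_ineq K (m + c - i) hK
        have h1 : m + c - i + 1 = m + c + 1 - i := by omega
        have h2 : K ^ (m + c + 1 - i) ≤ K ^ (m + c + 1) :=
          Nat.pow_le_pow_right hK (by omega)
        calc K * (m.choose i * Btilde' (m + c - i))
            = m.choose i * (K * Btilde' (m + c - i)) := by ring
          _ ≤ m.choose i * (Btilde' (m + c - i + 1) + K ^ (m + c - i + 1)) :=
              Nat.mul_le_mul_left _ hr
          _ ≤ m.choose i * (Btilde' (m + c + 1 - i) + K ^ (m + c + 1)) := by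
              rw [h1]
              exact Nat.mul_le_mul_left _ (Nat.add_le_add_left h2 _)
          _ = m.choose i * Btilde' (m + c + 1 - i) + m.choose i * K ^ (m + c + 1) := by ring
    _ = (∑ i ∈ range (m+1), m.choose i * Btilde' (m + c + 1 - i))
        + (∑ i ∈ range (m+1), m.choose i) * K ^ (m + c + 1) := by
        rw [Finset.sum_add_distrib, Finset.sum_mul]
    _ = (∑ i ∈ range (m+1), m.choose i * Btilde' (m + c + 1 - i))
        + K ^ (m + c + 1) * 2 ^ m := by
        rw [Nat.sum_range_choose]
        ring

lemma btilde_le_Ssum (m c : ℕ) : Btilde' (m + c) ≤ Ssum m c := by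
  unfold Ssum
  have h0 : (0 : ℕ) ∈ range (m+1) := mem_range.2 (by omega)
  have := Finset.single_le_sum (f := fun i => (m.choose i) * Btilde' (m + c - i))
    (fun i _ => Nat.zero_le _) h0
  simpa using this

lemma growth (K c : ℕ) (hK : 1 ≤ K) :
    ∃ M : ℕ, ∀ m ≥ M, K ^ (m + c + 1) * 2 ^ m ≤ Btilde' (m + c) := by
  set a := 2 * K with ha
  have ha2 : 2 ≤ a := by omega
  obtain ⟨J, hJ⟩ := (Nat.eventually_mul_pow_lt_factorial_sub (a^5) (a^2) 0).exists_forall_of_atTop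
  refine ⟨2 * J + c + 4, fun m hm => ?_⟩
  set q := m + c with hq
  have hq4 : 2 * J + 4 ≤ q := by omega
  set j := (q - 2) / 2 with hj
  have hjJ : J ≤ j := by omega
  have step1 : K ^ (q + 1) * 2 ^ m ≤ a ^ (q + 1) := by
    calc K ^ (q + 1) * 2 ^ m ≤ K ^ (q + 1) * 2 ^ (q + 1) :=
          Nat.mul_le_mul_left _ (Nat.pow_le_pow_right (by omega) (by omega))
      _ = a ^ (q + 1) := by rw [ha, mul_pow]; ring
  have step2 : a ^ (q + 1) ≤ a ^ 5 * (a ^ 2) ^ j := by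
    have : a ^ 5 * (a ^ 2) ^ j = a ^ (2 * j + 5) := by
      rw [← pow_mul, ← pow_add]; ring_nf
    rw [this]
    exact Nat.pow_le_pow_right (by omega) (by omega)
  have step3 : a ^ 5 * (a ^ 2) ^ j ≤ j.factorial := by
    have := hJ j hjJ
    simpa using this.le
  have step4 : j.factorial ≤ Btilde' q := by
    have := fact_le_Btilde' (q - 2)
    have hq2 : q - 2 + 2 = q := by omega
    rw [hq2] at this
    exact this
  calc K ^ (m + c + 1) * 2 ^ m ≤ a ^ (q + 1) := step1
    _ ≤ a ^ 5 * (a ^ 2) ^ j := step2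
    _ ≤ j.factorial := step3
    _ ≤ Btilde' q := step4

end GammaAux

namespace GammaAux

lemma main_ineq (K c m : ℕ) (hK : 1 ≤ K) (hgrow : K ^ (m + c + 1) * 2 ^ m ≤ Btilde' (m + c)) :
    K * Ssum m c ≤ Ssum (m + 1) c := by
  calc K * Ssum m c ≤ Tsum m c + K ^ (m + c + 1) * 2 ^ m := key_step m c K hK
    _ ≤ Tsum m c + Ssum m c :=
        Nat.add_le_add_left (hgrow.trans (btilde_le_Ssum m c)) _
    _ = Ssum (m + 1) c := (pascal_sum m c).symm

lemma Ssum_pos (m c : ℕ) (h : m + c ≠ 1) : 0 < Ssum m c :=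
  lt_of_lt_of_le (one_le_Btilde' (m + c) h) (btilde_le_Ssum m c)

end GammaAux


lemma Btilde'_eq (m : ℕ) : GammaAux.Btilde' m = Btilde m := rfl

/-- For fixed t and ℓ (of the same parity), γ_n(ℓ) → ∞ as n → ∞. -/
theorem gamma_tendsto_atTop (t l : ℕ) (ht : 2 ≤ t) (hl : t ≤ l) (hmod : l % 2 = t % 2) :
    Filter.Tendsto (fun n => gammaQ n t l) Filter.atTop Filter.atTop := by

  rw [Filter.tendsto_atTop]
  intro b
  set c := l - (l + t) / 2 with hc
  set K := max 1 ⌈b⌉₊ with hKdef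
  have hK : 1 ≤ K := le_max_left _ _
  have hbK : b ≤ (K : ℚ) := by
    calc b ≤ (⌈b⌉₊ : ℚ) := Nat.le_ceil b
      _ ≤ (K : ℚ) := by exact_mod_cast le_max_right 1 ⌈b⌉₊
  obtain ⟨M, hM⟩ := GammaAux.growth K c hK
  filter_upwards [Filter.eventually_ge_atTop (l + M + 2)] with n hn
  have hln : l ≤ n := by omega
  have hquot : (l + t) / 2 ≤ l := by omega
  set m := n - l with hm
  have hmM : M ≤ m := by omega
  have hm2 : 2 ≤ m := by omega
  have hnum : (∑ i ∈ Finset.range (n - l + 2),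
      (n - l + 1).choose i * Btilde (n - (l + t) / 2 + 1 - i)) = GammaAux.Ssum (m + 1) c := by
    unfold GammaAux.Ssum
    have h1 : n - l + 2 = (m + 1) + 1 := by omega
    rw [h1]
    apply Finset.sum_congr rfl
    intro i hi
    rw [Finset.mem_range] at hi
    have h2 : n - l + 1 = m + 1 := by omega
    have h3 : n - (l + t) / 2 + 1 - i = m + 1 + c - i := by omega
    rw [h2, h3, Btilde'_eq]
  have hden : (∑ i ∈ Finset.range (n - l + 1),
      (n - l).choose i * Btilde (n - (l + t) / 2 - i)) = GammaAux.Ssum m c := by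
    unfold GammaAux.Ssum
    have h1 : n - l + 1 = m + 1 := by omega
    rw [h1]
    apply Finset.sum_congr rfl
    intro i hi
    rw [Finset.mem_range] at hi
    have h3 : n - (l + t) / 2 - i = m + c - i := by omega
    rw [hm, h3, Btilde'_eq]
  have hpos : 0 < GammaAux.Ssum m c := GammaAux.Ssum_pos m c (by omega)
  have hmain : K * GammaAux.Ssum m c ≤ GammaAux.Ssum (m + 1) c :=
    GammaAux.main_ineq K c m hK (hM m hmM)
  have hfinal : (K : ℚ) ≤ gammaQ n t l := by
    rw [gammaQ, hnum, hden, le_div_iff₀ (by exact_mod_cast hpos)]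
    exact_mod_cast hmain
  exact hbK.trans hfinal
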